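/- Per-non-edge success probability in SlackGeneration: run SlackGeneration on S ⊆ V with activation probability p₀ ∈ (0,1] and palette [χ], χ ≥ 2: each u ∈ S is independently activated with probability p₀; each activated u picks c_u uniformly at random from [χ]; u retains c_u iff no other activated node of S adjacent to u picked the same color. Let v be a node such that every node of S ∪ {v} has at most Δ_s neighbors in S (with Δ_s ≥ 2), and let {u, w} ⊆ N(v) ∩ S be a non-adjacent pair. Then the probability that u and w are both activated with a common color which both retain and which no node of (N(v) ∩ S) \ {u, w} picks is at least (p₀²/χ) · ((χ−1)/χ)^{3Δ_s}. -/

import Mathlib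

open Finset

namespace SlackGen

variable {V : Type*} [Fintype V] [DecidableEq V] {χ : ℕ}

/-- An outcome of SlackGeneration: the activation status and the color choice of
each node. -/
abbrev Outcome (V : Type*) (χ : ℕ) := (V → Bool) × (V → Fin χ)

/-- Probability weight of an outcome: each node is activated independently with
probability `p₀`, and independently picks a uniformly random color from `[χ]`. -/
noncomputable def wgt (p₀ : ℝ) (χ : ℕ) {V : Type*} [Fintype V] (ω : Outcome V χ) : ℝ :=
  ∏ v : V, ((if ω.1 v then p₀ else 1 - p₀) * (1 / (χ : ℝ)))

/-- `u` picks color `c`: `u ∈ S`, `u` is activated, and `u` chose color `c`. -/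
def Picks (S : Finset V) (ω : Outcome V χ) (u : V) (c : Fin χ) : Prop :=
  u ∈ S ∧ ω.1 u = true ∧ ω.2 u = c

/-- `u ∈ S` retains its color: `u` is activated and no other activated node of `S`
adjacent to `u` chose the same color. -/
def Retains (G : SimpleGraph V) (S : Finset V) (ω : Outcome V χ) (u : V) : Prop :=
  u ∈ S ∧ ω.1 u = true ∧
    ∀ w ∈ S, w ≠ u → G.Adj u w → ω.1 w = true → ω.2 w ≠ ω.2 u

open Classical in
/-- The slack increase of `v`: the number of neighbors of `v` that retain a color
minus the number of distinct colors retained by neighbors of `v`. -/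
noncomputable def slackInc (G : SimpleGraph V) (S : Finset V) (v : V)
    (ω : Outcome V χ) : ℤ :=
  ((Finset.univ.filter fun u => G.Adj v u ∧ Retains G S ω u).card : ℤ) -
    ((Finset.univ.filter fun c : Fin χ =>
        ∃ u, G.Adj v u ∧ Retains G S ω u ∧ ω.2 u = c).card : ℤ)

open Classical in
/-- The non-edges of the graph induced on `N(v) ∩ S`: unordered pairs of distinct
non-adjacent vertices, both neighbors of `v` and both in `S`. -/
noncomputable def nbrNonEdges (G : SimpleGraph V) (v : V) (S : Finset V) :
    Finset (Sym2 V) :=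
  Finset.univ.filter fun e : Sym2 V =>
    ¬ e.IsDiag ∧ e ∉ G.edgeSet ∧ ∀ u ∈ e, G.Adj v u ∧ u ∈ S

end SlackGen

namespace SlackGen

set_option maxHeartbeats 2000000 in
open Classical in
/-- **Per-non-edge success probability in SlackGeneration.** Run SlackGeneration
on `S` with activation probability `p₀ ∈ (0,1]` and palette `[χ]`, `χ ≥ 2`.
Suppose every node of `S ∪ {v}` has at most `Δs ≥ 2` neighbors in `S`, and let
`{u, w} ⊆ N(v) ∩ S` be a non-adjacent pair. Then the probability that `u` and `w`
are both activated with a common color which both retain and which no node of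
`(N(v) ∩ S) \ {u, w}` picks is at least `(p₀²/χ)·((χ−1)/χ)^{3Δs}`. -/
theorem per_nonedge_success {V : Type*} [Fintype V] [DecidableEq V]
    (G : SimpleGraph V) [DecidableRel G.Adj]
    (p₀ : ℝ) (hp₀ : p₀ ∈ Set.Ioc (0 : ℝ) 1)
    (χ Δs : ℕ) (hχ : 2 ≤ χ) (hΔs : 2 ≤ Δs)
    (S : Finset V) (v u w : V)
    (hdeg : ∀ x ∈ S ∪ {v}, (G.neighborFinset x ∩ S).card ≤ Δs)
    (hu : u ∈ G.neighborFinset v ∩ S) (hw : w ∈ G.neighborFinset v ∩ S)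
    (huw : u ≠ w) (hnadj : ¬ G.Adj u w) :
    p₀ ^ 2 / (χ : ℝ) * (((χ : ℝ) - 1) / (χ : ℝ)) ^ (3 * Δs) ≤
      ∑ ω : Outcome V χ,
        (if ∃ c : Fin χ, Picks S ω u c ∧ Picks S ω w c ∧
              Retains G S ω u ∧ Retains G S ω w ∧
              ∀ x ∈ G.neighborFinset v ∩ S, x ≠ u → x ≠ w → ¬ Picks S ω x c
         then wgt p₀ χ ω else 0) := by
  classical
  obtain ⟨hp0, hp1⟩ := hp₀
  have hχR : (0:ℝ) < χ := by
    have : (0:ℕ) < χ := by omega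
    exact_mod_cast this
  have hχne : (χ:ℝ) ≠ 0 := ne_of_gt hχR
  obtain ⟨hvu, huS⟩ := Finset.mem_inter.mp hu
  obtain ⟨hvw, hwS⟩ := Finset.mem_inter.mp hw
  have hvu' : G.Adj v u := (SimpleGraph.mem_neighborFinset _ _ _).mp hvu
  have hvw' : G.Adj v w := (SimpleGraph.mem_neighborFinset _ _ _).mp hvw
  set T : Finset V :=
    ((G.neighborFinset u ∪ G.neighborFinset w ∪ G.neighborFinset v) ∩ S) \ {u, w} with hTdef
  have huT : u ∉ T := by simp [hTdef]
  have hwT : w ∉ T := by simp [hTdef]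
  have memT : ∀ x, x ∈ S → x ≠ u → x ≠ w →
      (G.Adj u x ∨ G.Adj w x ∨ G.Adj v x) → x ∈ T := by
    intro x hxS hxu hxw hadj
    simp only [hTdef, Finset.mem_sdiff, Finset.mem_inter, Finset.mem_union,
      SimpleGraph.mem_neighborFinset, Finset.mem_insert, Finset.mem_singleton]
    refine ⟨⟨by tauto, hxS⟩, by tauto⟩
  -- per-vertex condition and weight
  set cond : Fin χ → V → Bool → Fin χ → Prop := fun c x b y =>
    if x = u ∨ x = w then (b = true ∧ y = c)
    else if x ∈ T then ¬ (b = true ∧ y = c) else True with hconddef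
  set h : Fin χ → V → Bool → Fin χ → ℝ := fun c x b y =>
    if cond c x b y then (if b then p₀ else 1 - p₀) * (1/(χ:ℝ)) else 0 with hhdef
  have hbpos : ∀ b : Bool, 0 ≤ (if b then p₀ else 1 - p₀) := by
    intro b; cases b <;> simp <;> linarith
  have hwgt0 : ∀ ω : Outcome V χ, 0 ≤ wgt p₀ χ ω := by
    intro ω
    refine Finset.prod_nonneg fun x _ => mul_nonneg (hbpos _) (by positivity)
  -- product of h equals indicator of the full condition times wgt
  have prodEq : ∀ (c : Fin χ) (ω : Outcome V χ),
      (∏ x : V, h c x (ω.1 x) (ω.2 x)) =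
        if (∀ x : V, cond c x (ω.1 x) (ω.2 x)) then wgt p₀ χ ω else 0 := by
    intro c ω
    by_cases H : ∀ x : V, cond c x (ω.1 x) (ω.2 x)
    · rw [if_pos H]
      exact Finset.prod_congr rfl fun x _ => by simp only [hhdef, if_pos (H x)]
    · rw [if_neg H]
      push_neg at H
      obtain ⟨x, hx⟩ := H
      exact Finset.prod_eq_zero (Finset.mem_univ x) (by simp only [hhdef, if_neg hx])
  have condu : ∀ (c : Fin χ) (ω : Outcome V χ), (∀ x : V, cond c x (ω.1 x) (ω.2 x)) →
      ω.1 u = true ∧ ω.2 u = c := by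
    intro c ω H
    have := H u
    simpa only [hconddef, if_pos (Or.inl rfl)] using this
  have condw : ∀ (c : Fin χ) (ω : Outcome V χ), (∀ x : V, cond c x (ω.1 x) (ω.2 x)) →
      ω.1 w = true ∧ ω.2 w = c := by
    intro c ω H
    have := H w
    simpa only [hconddef, if_pos (Or.inr rfl)] using this
  have condT : ∀ (c : Fin χ) (ω : Outcome V χ), (∀ x : V, cond c x (ω.1 x) (ω.2 x)) →
      ∀ x ∈ T, ¬ (ω.1 x = true ∧ ω.2 x = c) := by
    intro c ω H x hxT
    have hxu : x ≠ u := fun e => huT (e ▸ hxT)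
    have hxw : x ≠ w := fun e => hwT (e ▸ hxT)
    have := H x
    simpa only [hconddef, if_neg (by tauto : ¬ (x = u ∨ x = w)), if_pos hxT] using this
  -- uniqueness of the color
  have uniq : ∀ (ω : Outcome V χ) (c c' : Fin χ),
      (∀ x : V, cond c x (ω.1 x) (ω.2 x)) → (∀ x : V, cond c' x (ω.1 x) (ω.2 x)) → c = c' := by
    intro ω c c' h1 h2
    rw [← (condu c ω h1).2, (condu c' ω h2).2]
  -- the full condition implies the big event
  have impl : ∀ (c : Fin χ) (ω : Outcome V χ), (∀ x : V, cond c x (ω.1 x) (ω.2 x)) →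
      (∃ c : Fin χ, Picks S ω u c ∧ Picks S ω w c ∧
          Retains G S ω u ∧ Retains G S ω w ∧
          ∀ x ∈ G.neighborFinset v ∩ S, x ≠ u → x ≠ w → ¬ Picks S ω x c) := by
    intro c ω H
    obtain ⟨hau, hcu⟩ := condu c ω H
    obtain ⟨haw, hcw⟩ := condw c ω H
    refine ⟨c, ⟨huS, hau, hcu⟩, ⟨hwS, haw, hcw⟩, ?_, ?_, ?_⟩
    · refine ⟨huS, hau, fun x hxS hxu hadj hax => ?_⟩
      have hxw : x ≠ w := by rintro rfl; exact hnadj hadj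
      have hxT := memT x hxS hxu hxw (Or.inl hadj)
      intro hcx
      exact condT c ω H x hxT ⟨hax, by rw [← hcu]; exact hcx⟩
    · refine ⟨hwS, haw, fun x hxS hxw hadj hax => ?_⟩
      have hxu : x ≠ u := by rintro rfl; exact hnadj (hadj.symm)
      have hxT := memT x hxS hxu hxw (Or.inr (Or.inl hadj))
      intro hcx
      exact condT c ω H x hxT ⟨hax, by rw [← hcw]; exact hcx⟩
    · intro x hx hxu hxw hpick
      obtain ⟨hxv, hxS⟩ := Finset.mem_inter.mp hx
      have hadj : G.Adj v x := (SimpleGraph.mem_neighborFinset _ _ _).mp hxv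
      have hxT := memT x hxS hxu hxw (Or.inr (Or.inr hadj))
      exact condT c ω H x hxT ⟨hpick.2.1, hpick.2.2⟩
  -- pointwise bound
  have key : ∀ ω : Outcome V χ,
      (∑ c : Fin χ, ∏ x : V, h c x (ω.1 x) (ω.2 x)) ≤
        (if ∃ c : Fin χ, Picks S ω u c ∧ Picks S ω w c ∧
              Retains G S ω u ∧ Retains G S ω w ∧
              ∀ x ∈ G.neighborFinset v ∩ S, x ≠ u → x ≠ w → ¬ Picks S ω x c
         then wgt p₀ χ ω else 0) := by
    intro ω
    by_cases H : ∃ c : Fin χ, ∀ x : V, cond c x (ω.1 x) (ω.2 x)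
    · obtain ⟨c₀, hc₀⟩ := H
      have heq : (∑ c : Fin χ, ∏ x : V, h c x (ω.1 x) (ω.2 x)) = wgt p₀ χ ω := by
        rw [Finset.sum_eq_single c₀]
        · rw [prodEq, if_pos hc₀]
        · intro c _ hne
          rw [prodEq, if_neg]
          intro hc; exact hne (uniq ω c c₀ hc hc₀)
        · intro hc; exact absurd (Finset.mem_univ c₀) hc
      rw [heq, if_pos (impl c₀ ω hc₀)]
    · have heq : (∑ c : Fin χ, ∏ x : V, h c x (ω.1 x) (ω.2 x)) = 0 :=
        Finset.sum_eq_zero fun c _ => by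
          rw [prodEq, if_neg (fun hc => H ⟨c, hc⟩)]
      rw [heq]
      split
      · exact hwgt0 ω
      · exact le_refl 0
  -- per-vertex mass
  have sumIte : ∀ c : Fin χ, (∑ b : Bool, ∑ y : Fin χ,
      (if b = true ∧ y = c then p₀ * (1/(χ:ℝ)) else 0)) = p₀ * (1/(χ:ℝ)) := by
    intro c
    rw [Fintype.sum_bool]
    simp [Finset.sum_ite_eq' Finset.univ c]
  have sumW : (∑ b : Bool, ∑ y : Fin χ, (if b = true then p₀ else 1 - p₀) * (1/(χ:ℝ))) = 1 := by
    rw [Fintype.sum_bool]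
    rw [Finset.sum_const, Finset.sum_const]
    simp only [Finset.card_univ, Fintype.card_fin, nsmul_eq_mul, if_true, if_false]
    field_simp
    simp only [Bool.false_eq_true, ↓reduceIte]; ring
  have Muw : ∀ (c : Fin χ) (x : V), (x = u ∨ x = w) →
      (∑ b : Bool, ∑ y : Fin χ, h c x b y) = p₀ * (1/(χ:ℝ)) := by
    intro c x hx
    have hval : ∀ (b : Bool) (y : Fin χ),
        h c x b y = (if b = true ∧ y = c then p₀ * (1/(χ:ℝ)) else 0) := by
      intro b y
      simp only [hhdef, hconddef, if_pos hx]
      by_cases hP : b = true ∧ y = c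
      · rw [if_pos hP, if_pos hP, hP.1, if_pos rfl]
      · rw [if_neg hP, if_neg hP]
    rw [Finset.sum_congr rfl fun b _ => Finset.sum_congr rfl fun y _ => hval b y]
    exact sumIte c
  have MT : ∀ (c : Fin χ) (x : V), ¬ (x = u ∨ x = w) → x ∈ T →
      (∑ b : Bool, ∑ y : Fin χ, h c x b y) = 1 - p₀ * (1/(χ:ℝ)) := by
    intro c x hx hxT
    have hval : ∀ (b : Bool) (y : Fin χ),
        h c x b y = (if b = true then p₀ else 1 - p₀) * (1/(χ:ℝ))
          - (if b = true ∧ y = c then p₀ * (1/(χ:ℝ)) else 0) := by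
      intro b y
      simp only [hhdef, hconddef, if_neg hx, if_pos hxT]
      by_cases hP : b = true ∧ y = c
      · rw [if_neg (not_not_intro hP), if_pos hP, hP.1, if_pos rfl]; ring
      · rw [if_pos hP, if_neg hP]; ring
    rw [Finset.sum_congr rfl fun b _ => Finset.sum_congr rfl fun y _ => hval b y]
    rw [Finset.sum_congr rfl fun (b : Bool) _ => Finset.sum_sub_distrib _ _, Finset.sum_sub_distrib,
      sumW, sumIte c]
  have Mone : ∀ (c : Fin χ) (x : V), ¬ (x = u ∨ x = w) → x ∉ T →
      (∑ b : Bool, ∑ y : Fin χ, h c x b y) = 1 := by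
    intro c x hx hxT
    have hval : ∀ (b : Bool) (y : Fin χ),
        h c x b y = (if b = true then p₀ else 1 - p₀) * (1/(χ:ℝ)) := by
      intro b y
      simp only [hhdef, hconddef, if_neg hx, if_neg hxT]
      rw [if_pos trivial]
    rw [Finset.sum_congr rfl fun b _ => Finset.sum_congr rfl fun y _ => hval b y]
    exact sumW
  -- factorization
  have factor : ∀ (F : V → Bool → Fin χ → ℝ),
      (∑ ω : Outcome V χ, ∏ x : V, F x (ω.1 x) (ω.2 x))
        = ∏ x : V, ∑ b : Bool, ∑ y : Fin χ, F x b y := by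
    intro F
    rw [Fintype.sum_prod_type]
    have step1 : ∀ a : V → Bool,
        (∑ b : V → Fin χ, ∏ x : V, F x (a x) (b x)) = ∏ x : V, ∑ y : Fin χ, F x (a x) y := by
      intro a
      rw [Fintype.prod_sum (fun x y => F x (a x) y)]
    rw [Finset.sum_congr rfl fun a _ => step1 a]
    rw [Fintype.prod_sum (fun x b => ∑ y : Fin χ, F x b y)]
  -- product over vertices
  have prodM : ∀ c : Fin χ,
      (∏ x : V, ∑ b : Bool, ∑ y : Fin χ, h c x b y)
        = (p₀ * (1/(χ:ℝ)))^2 * (1 - p₀ * (1/(χ:ℝ)))^(T.card) := by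
    intro c
    have hsub : ({u, w} ∪ T : Finset V) ⊆ Finset.univ := Finset.subset_univ _
    have houtside : ∀ x ∈ Finset.univ, x ∉ ({u, w} ∪ T : Finset V) →
        (∑ b : Bool, ∑ y : Fin χ, h c x b y) = 1 := by
      intro x _ hx
      simp only [Finset.mem_union, Finset.mem_insert, Finset.mem_singleton, not_or] at hx
      exact Mone c x (by tauto) hx.2
    rw [← Finset.prod_subset hsub houtside]
    have hdisj : Disjoint ({u, w} : Finset V) T := by
      rw [Finset.disjoint_left]
      intro x hx
      simp only [Finset.mem_insert, Finset.mem_singleton] at hx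
      rcases hx with rfl | rfl
      · exact huT
      · exact hwT
    rw [Finset.prod_union hdisj, Finset.prod_pair huw]
    rw [Muw c u (Or.inl rfl), Muw c w (Or.inr rfl)]
    rw [Finset.prod_congr rfl (fun x hx => MT c x ?_ hx), Finset.prod_const]
    · ring
    · rintro (rfl | rfl)
      · exact huT hx
      · exact hwT hx
  -- cardinality bound
  have hTcard : T.card ≤ 3 * Δs := by
    have h1 : T.card ≤ ((G.neighborFinset u ∪ G.neighborFinset w ∪ G.neighborFinset v) ∩ S).card :=
      Finset.card_le_card (Finset.sdiff_subset)
    have h2 : ((G.neighborFinset u ∪ G.neighborFinset w ∪ G.neighborFinset v) ∩ S)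
        = (G.neighborFinset u ∩ S) ∪ (G.neighborFinset w ∩ S) ∪ (G.neighborFinset v ∩ S) := by
      rw [Finset.union_inter_distrib_right, Finset.union_inter_distrib_right]
    have hu' : (G.neighborFinset u ∩ S).card ≤ Δs :=
      hdeg u (Finset.mem_union_left _ huS)
    have hw' : (G.neighborFinset w ∩ S).card ≤ Δs :=
      hdeg w (Finset.mem_union_left _ hwS)
    have hv' : (G.neighborFinset v ∩ S).card ≤ Δs :=
      hdeg v (Finset.mem_union_right _ (Finset.mem_singleton_self v))
    calc T.card ≤ ((G.neighborFinset u ∩ S) ∪ (G.neighborFinset w ∩ S)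
          ∪ (G.neighborFinset v ∩ S)).card := by rw [← h2]; exact h1
      _ ≤ ((G.neighborFinset u ∩ S) ∪ (G.neighborFinset w ∩ S)).card
          + (G.neighborFinset v ∩ S).card := Finset.card_union_le _ _
      _ ≤ (G.neighborFinset u ∩ S).card + (G.neighborFinset w ∩ S).card
          + (G.neighborFinset v ∩ S).card := by
            have := Finset.card_union_le (G.neighborFinset u ∩ S) (G.neighborFinset w ∩ S)
            omega
      _ ≤ 3 * Δs := by omega
  -- put everything together
  have main : (∑ ω : Outcome V χ,
      (if ∃ c : Fin χ, Picks S ω u c ∧ Picks S ω w c ∧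
            Retains G S ω u ∧ Retains G S ω w ∧
            ∀ x ∈ G.neighborFinset v ∩ S, x ≠ u → x ≠ w → ¬ Picks S ω x c
       then wgt p₀ χ ω else 0))
      ≥ (χ:ℝ) * ((p₀ * (1/(χ:ℝ)))^2 * (1 - p₀ * (1/(χ:ℝ)))^(T.card)) := by
    have step1 : (∑ ω : Outcome V χ, ∑ c : Fin χ, ∏ x : V, h c x (ω.1 x) (ω.2 x))
        ≤ ∑ ω : Outcome V χ,
          (if ∃ c : Fin χ, Picks S ω u c ∧ Picks S ω w c ∧
                Retains G S ω u ∧ Retains G S ω w ∧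
                ∀ x ∈ G.neighborFinset v ∩ S, x ≠ u → x ≠ w → ¬ Picks S ω x c
           then wgt p₀ χ ω else 0) :=
      Finset.sum_le_sum fun ω _ => key ω
    have step2 : (∑ ω : Outcome V χ, ∑ c : Fin χ, ∏ x : V, h c x (ω.1 x) (ω.2 x))
        = ∑ c : Fin χ, ∑ ω : Outcome V χ, ∏ x : V, h c x (ω.1 x) (ω.2 x) :=
      Finset.sum_comm
    have step3 : (∑ c : Fin χ, ∑ ω : Outcome V χ, ∏ x : V, h c x (ω.1 x) (ω.2 x))
        = (χ:ℝ) * ((p₀ * (1/(χ:ℝ)))^2 * (1 - p₀ * (1/(χ:ℝ)))^(T.card)) := by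
      rw [Finset.sum_congr rfl fun c _ => (factor (h c)).trans (prodM c)]
      rw [Finset.sum_const, Finset.card_univ, Fintype.card_fin, nsmul_eq_mul]
    calc (χ:ℝ) * ((p₀ * (1/(χ:ℝ)))^2 * (1 - p₀ * (1/(χ:ℝ)))^(T.card))
        = ∑ ω : Outcome V χ, ∑ c : Fin χ, ∏ x : V, h c x (ω.1 x) (ω.2 x) := by
          rw [step2, step3]
      _ ≤ _ := step1
  refine le_trans ?_ main
  -- final arithmetic
  have hq0 : (0:ℝ) ≤ ((χ:ℝ) - 1) / (χ:ℝ) := by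
    apply div_nonneg _ (le_of_lt hχR)
    have : (1:ℝ) ≤ (χ:ℝ) := by exact_mod_cast (by omega : 1 ≤ χ)
    linarith
  have hq1 : ((χ:ℝ) - 1) / (χ:ℝ) ≤ 1 := by
    rw [div_le_one hχR]; linarith
  have hbase : ((χ:ℝ) - 1) / (χ:ℝ) ≤ 1 - p₀ * (1/(χ:ℝ)) := by
    have h1 : p₀ * (1/(χ:ℝ)) ≤ 1/(χ:ℝ) := mul_le_of_le_one_left (by positivity) hp1
    have h2 : ((χ:ℝ) - 1) / (χ:ℝ) = 1 - 1/(χ:ℝ) := by field_simp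
    rw [h2]; linarith
  have hpow : (((χ:ℝ) - 1) / (χ:ℝ))^(3*Δs) ≤ (1 - p₀ * (1/(χ:ℝ)))^(T.card) := by
    calc (((χ:ℝ) - 1) / (χ:ℝ))^(3*Δs) ≤ (((χ:ℝ) - 1) / (χ:ℝ))^(T.card) :=
          pow_le_pow_of_le_one hq0 hq1 hTcard
      _ ≤ (1 - p₀ * (1/(χ:ℝ)))^(T.card) := pow_le_pow_left₀ hq0 hbase _
  have hχeq : (χ:ℝ) * (p₀ * (1/(χ:ℝ)))^2 = p₀^2 / (χ:ℝ) := by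
    field_simp
  calc p₀ ^ 2 / (χ:ℝ) * (((χ:ℝ) - 1) / (χ:ℝ)) ^ (3 * Δs)
      = (χ:ℝ) * (p₀ * (1/(χ:ℝ)))^2 * (((χ:ℝ) - 1) / (χ:ℝ)) ^ (3 * Δs) := by rw [hχeq]
    _ ≤ (χ:ℝ) * (p₀ * (1/(χ:ℝ)))^2 * (1 - p₀ * (1/(χ:ℝ)))^(T.card) := by
        apply mul_le_mul_of_nonneg_left hpow
        positivity
    _ = (χ:ℝ) * ((p₀ * (1/(χ:ℝ)))^2 * (1 - p₀ * (1/(χ:ℝ)))^(T.card)) := by ring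


end SlackGen
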